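/- Injectivity of the second projection: let n ≥ 1, let λ₁ < λ₂ < … < λ_n and λ'₁ < λ'₂ < … < λ'_n be real numbers, and let μ₁,…,μ_n and μ'₁,…,μ'_n be real numbers. Suppose that for every k = 1,…,n one has Σ_{l=1}^n λ_l^k = Σ_{l=1}^n (λ'_l)^k and Σ_{l=1}^n μ_l λ_l^{k−1} = Σ_{l=1}^n μ'_l (λ'_l)^{k−1}. Then λ_l = λ'_l and μ_l = μ'_l for all l = 1,…,n. -/

import Mathlib

open Finset Polynomial

lemma strictMono_eq_of_multiset_eq {n : ℕ} {f g : Fin n → ℝ}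
    (hf : StrictMono f) (hg : StrictMono g)
    (h : Multiset.map f Finset.univ.val = Multiset.map g Finset.univ.val) : f = g := by
  have himg : Finset.image f Finset.univ = Finset.image g Finset.univ :=
    Finset.val_injective (by simp [Finset.image_val, h])
  have hcard : (Finset.image f Finset.univ).card = n := by
    rw [Finset.card_image_of_injective _ hf.injective, Finset.card_univ, Fintype.card_fin]
  have h1 := Finset.orderEmbOfFin_unique hcard
    (fun x => Finset.mem_image_of_mem f (Finset.mem_univ x)) hf
  have h2 := Finset.orderEmbOfFin_unique hcard
    (fun x => by rw [himg]; exact Finset.mem_image_of_mem g (Finset.mem_univ x)) hg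
  exact h1.trans h2.symm

lemma esymm_eq_of_psum_eq {n : ℕ} (lam lam' : Fin n → ℝ)
    (hps : ∀ k : ℕ, 1 ≤ k → k ≤ n → ∑ l, lam l ^ k = ∑ l, lam' l ^ k) :
    ∀ k : ℕ, k ≤ n → (Multiset.map lam Finset.univ.val).esymm k
      = (Multiset.map lam' Finset.univ.val).esymm k := by
  intro k
  induction k using Nat.strong_induction_on with
  | _ k ih =>
    intro hkn
    rcases Nat.eq_zero_or_pos k with rfl | hk
    · simp [Multiset.esymm]
    have newton := congrArg (MvPolynomial.aeval lam) (MvPolynomial.mul_esymm_eq_sum (Fin n) ℝ k)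
    have newton' := congrArg (MvPolynomial.aeval lam') (MvPolynomial.mul_esymm_eq_sum (Fin n) ℝ k)
    simp only [map_mul, map_sum, map_pow, map_neg, map_one, map_natCast,
      MvPolynomial.aeval_esymm_eq_multiset_esymm, MvPolynomial.psum, map_sum, map_pow,
      MvPolynomial.aeval_X] at newton newton'
    have hs : ∑ a ∈ Finset.HasAntidiagonal.antidiagonal k with a.1 < k,
        (-1 : ℝ) ^ a.1 * (Multiset.map lam Finset.univ.val).esymm a.1 * ∑ i, lam i ^ a.2
        = ∑ a ∈ Finset.HasAntidiagonal.antidiagonal k with a.1 < k,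
        (-1 : ℝ) ^ a.1 * (Multiset.map lam' Finset.univ.val).esymm a.1 * ∑ i, lam' i ^ a.2 := by
      apply Finset.sum_congr rfl
      intro a ha
      simp only [Finset.mem_filter, Finset.HasAntidiagonal.mem_antidiagonal] at ha
      have h1 : a.1 < k := ha.2
      have h2 : 1 ≤ a.2 := by omega
      have h3 : a.2 ≤ n := by omega
      rw [ih a.1 h1 (by omega), hps a.2 h2 h3]
    have : (k : ℝ) * (Multiset.map lam Finset.univ.val).esymm k
        = (k : ℝ) * (Multiset.map lam' Finset.univ.val).esymm k := by
      rw [newton, newton', hs]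
    have hk0 : (k : ℝ) ≠ 0 := Nat.cast_ne_zero.mpr (by omega)
    exact mul_left_cancel₀ hk0 this

/- STATEMENT 13: injectivity of the second projection. If λ₁ < … < λ_n and
λ'₁ < … < λ'_n are real, μ, μ' are real n-tuples, and for all k = 1,…,n
Σ λ_l^k = Σ (λ'_l)^k  and  Σ μ_l λ_l^(k−1) = Σ μ'_l (λ'_l)^(k−1),
then λ = λ' and μ = μ'. -/

theorem power_sums_injective (n : ℕ) (hn : 1 ≤ n)
    (lam lam' mu mu' : Fin n → ℝ)
    (hlam : StrictMono lam) (hlam' : StrictMono lam')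
    (hsum : ∀ k : ℕ, 1 ≤ k → k ≤ n →
      (∑ l, lam l ^ k = ∑ l, lam' l ^ k) ∧
      (∑ l, mu l * lam l ^ (k - 1) = ∑ l, mu' l * lam' l ^ (k - 1))) :
    lam = lam' ∧ mu = mu' := by
  have hesymm := esymm_eq_of_psum_eq lam lam' (fun k h1 h2 => (hsum k h1 h2).1)
  -- equal polynomials
  have hcard : Multiset.card (Multiset.map lam Finset.univ.val) = n := by simp
  have hcard' : Multiset.card (Multiset.map lam' Finset.univ.val) = n := by simp
  have hP : ((Multiset.map lam Finset.univ.val).map fun t => X - C t).prod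
      = ((Multiset.map lam' Finset.univ.val).map fun t => X - C t).prod := by
    apply Polynomial.ext
    intro i
    rcases le_or_gt i n with hi | hi
    · rw [Multiset.prod_X_sub_C_coeff _ (by rw [hcard]; exact hi),
        Multiset.prod_X_sub_C_coeff _ (by rw [hcard']; exact hi), hcard, hcard',
        hesymm (n - i) (Nat.sub_le n i)]
    · have d1 : (((Multiset.map lam Finset.univ.val).map fun t => X - C t).prod).natDegree = n := by
        rw [Polynomial.natDegree_multiset_prod_X_sub_C_eq_card, hcard]
      have d2 : (((Multiset.map lam' Finset.univ.val).map fun t => X - C t).prod).natDegree = n := by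
        rw [Polynomial.natDegree_multiset_prod_X_sub_C_eq_card, hcard']
      rw [Polynomial.coeff_eq_zero_of_natDegree_lt (by rw [d1]; exact hi),
        Polynomial.coeff_eq_zero_of_natDegree_lt (by rw [d2]; exact hi)]
  have hmult : Multiset.map lam Finset.univ.val = Multiset.map lam' Finset.univ.val := by
    have := congrArg Polynomial.roots hP
    rwa [Polynomial.roots_multiset_prod_X_sub_C, Polynomial.roots_multiset_prod_X_sub_C] at this
  have hlameq : lam = lam' := strictMono_eq_of_multiset_eq hlam hlam' hmult
  refine ⟨hlameq, ?_⟩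
  have hv : (fun l => mu l - mu' l) = 0 := by
    apply Matrix.eq_zero_of_forall_pow_sum_mul_pow_eq_zero hlam.injective
    intro i
    have h1 : 1 ≤ (i : ℕ) + 1 := Nat.le_add_left 1 _
    have h2 : (i : ℕ) + 1 ≤ n := i.2
    have := (hsum ((i : ℕ) + 1) h1 h2).2
    rw [← hlameq] at this
    simp only [Nat.add_sub_cancel] at this
    simp only [sub_mul]
    rw [Finset.sum_sub_distrib, this, sub_self]
  funext l
  have := congrFun hv l
  simpa [sub_eq_zero] using this
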